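/- The optimal value of the following semidefinite program equals 3/4: maximize ⟨τ, Q^{BC} + Q^{OT}⟩ over density matrices τ on C ⊗ Y ⊗ A ⊗ G = ℂ² ⊗ ℂ² ⊗ ℂ³ ⊗ ℂ², subject to Tr_{C,G}(τ) = Tr_B(|ψ⟩⟨ψ|), where |ψ⟩ = Σ_{y∈{0,1}} (1/√2)|y⟩_Y ⊗ |φ_y⟩_{A⊗B}, Q^{BC} = |0⟩⟨0|_C ⊗ Σ_{y∈{0,1}} |y⟩⟨y|_Y ⊗ 1_A ⊗ |y⟩⟨y|_G, and Q^{OT} = |1⟩⟨1|_C ⊗ Σ_{y∈{0,1}} |y⟩⟨y|_Y ⊗ 1_A ⊗ |y⟩⟨y|_G. (This is the optimal cheating probability for Bob in the stochastic bit-commitment/oblivious-transfer switch protocol, where Bob may choose the subtask c adaptively.) -/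

import Mathlib

/-! STATEMENT 6: Bob's optimal cheating probability in the stochastic bit-commitment / oblivious-transfer switch protocol equals 3/4. -/

open Matrix
open scoped Matrix BigOperators ComplexOrder

noncomputable section

/-- Square matrices over ℂ indexed by `α`. -/
abbrev Mat (α : Type) : Type := Matrix α α ℂ

/-- A density matrix: positive semidefinite with unit trace. -/
def IsDensity {α : Type} [Fintype α] [DecidableEq α] (ρ : Mat α) : Prop :=
  ρ.PosSemidef ∧ ρ.trace = 1

/-- Hilbert–Schmidt inner product ⟨P, Q⟩ = Tr(P† Q). -/
def hs {α : Type} [Fintype α] (P Q : Mat α) : ℂ := (Pᴴ * Q).trace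

/-- Outer product |v⟩⟨v|. -/
def outer {α : Type} (v : α → ℂ) : Mat α := fun i j => v i * star (v j)

/-- Standard basis vector |i⟩. -/
def ket {α : Type} [DecidableEq α] (i : α) : α → ℂ := fun j => if j = i then 1 else 0

/-- The embedding of Fin 2 into Fin 3. -/
def f23 (y : Fin 2) : Fin 3 := ⟨y.val, by omega⟩

/-- |φ_y⟩ = (|yy⟩ + |22⟩)/√2 ∈ ℂ³ ⊗ ℂ³. -/
def phi (y : Fin 2) : Fin 3 × Fin 3 → ℂ :=
  fun p => (ket (f23 y, f23 y) p + ket ((2 : Fin 3), (2 : Fin 3)) p) / (Real.sqrt 2 : ℂ)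

/-- Partial trace over the first tensor factor. -/
def ptrA {α β : Type} [Fintype α] (ρ : Mat (α × β)) : Mat β :=
  fun b b' => ∑ a, ρ (a, b) (a, b')

/-- |ψ⟩ = Σ_y (1/√2)|y⟩_Y ⊗ |φ_y⟩_{A⊗B}. -/
def psiBC : Fin 2 × Fin 3 × Fin 3 → ℂ :=
  fun p => phi p.1 (p.2.1, p.2.2) / (Real.sqrt 2 : ℂ)

/-- Partial trace over B, the last qutrit factor of Y ⊗ A ⊗ B. -/
def trB_psi (ρ : Mat (Fin 2 × Fin 3 × Fin 3)) : Mat (Fin 2 × Fin 3) :=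
  fun p q => ∑ b, ρ (p.1, p.2, b) (q.1, q.2, b)

/-- Partial trace over C and G, the outer factors of C ⊗ Y ⊗ A ⊗ G. -/
def trCG (τ : Mat (Fin 2 × Fin 2 × Fin 3 × Fin 2)) : Mat (Fin 2 × Fin 3) :=
  fun p q => ∑ c, ∑ g, τ (c, p.1, p.2, g) (c, q.1, q.2, g)

/-- Q^{BC} = |0⟩⟨0|_C ⊗ Σ_y |y⟩⟨y|_Y ⊗ 1_A ⊗ |y⟩⟨y|_G. -/
def QBC : Mat (Fin 2 × Fin 2 × Fin 3 × Fin 2) := fun p q =>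
  match p, q with
  | (c, y, a, g), (c', y', a', g') =>
    ket (0 : Fin 2) c * star (ket (0 : Fin 2) c') *
      (∑ u : Fin 2, ket u y * star (ket u y') *
        (if a = a' then 1 else 0) * (ket u g * star (ket u g')))

/-- Q^{OT} = |1⟩⟨1|_C ⊗ Σ_y |y⟩⟨y|_Y ⊗ 1_A ⊗ |y⟩⟨y|_G. -/
def QOT : Mat (Fin 2 × Fin 2 × Fin 3 × Fin 2) := fun p q =>
  match p, q with
  | (c, y, a, g), (c', y', a', g') =>
    ket (1 : Fin 2) c * star (ket (1 : Fin 2) c') *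
      (∑ u : Fin 2, ket u y * star (ket u y') *
        (if a = a' then 1 else 0) * (ket u g * star (ket u g')))

/-! ### Auxiliary definitions for the proof -/

lemma star_ite (p : Prop) [Decidable p] (a b : ℂ) :
    star (if p then a else b) = if p then star a else star b := by split <;> rfl

/-- Slice of a big matrix along fixed values of the C and G registers. -/
def slc (c g : Fin 2) (τ : Mat (Fin 2 × Fin 2 × Fin 3 × Fin 2)) : Mat (Fin 2 × Fin 3) :=
  fun p q => τ (c, p.1, p.2, g) (c, q.1, q.2, g)

/-- |g⟩⟨g|_Y ⊗ 1_A on Y ⊗ A. -/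
def P2 (g : Fin 2) : Mat (Fin 2 × Fin 3) :=
  fun p q => if p.1 = g ∧ q.1 = g ∧ p.2 = q.2 then 1 else 0

/-- The reduced state Tr_B |ψ⟩⟨ψ|, written explicitly. -/
def rhoE : Mat (Fin 2 × Fin 3) := fun p q =>
  (if p = ((0 : Fin 2), (0 : Fin 3)) ∧ q = ((0 : Fin 2), (0 : Fin 3)) then 1/4 else 0) +
  (if p = ((1 : Fin 2), (1 : Fin 3)) ∧ q = ((1 : Fin 2), (1 : Fin 3)) then 1/4 else 0) +
  (if p.2 = 2 ∧ q.2 = 2 then 1/4 else 0)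

/-- Dual certificate family. -/
def ZZ (x y : ℝ) : Mat (Fin 2 × Fin 3) := fun p q =>
  if p.2 = 2 ∧ q.2 = 2 then (if p.1 = q.1 then ((y : ℂ)^2) else ((x : ℂ) * (y : ℂ)))
  else (if p = q then 1 else 0)

/-! ### Basic positivity lemmas -/

lemma outer_posSemidef {α : Type} [Fintype α] [DecidableEq α] (v : α → ℂ) :
    (outer v).PosSemidef := by
  refine Matrix.posSemidef_iff_dotProduct_mulVec.mpr ⟨?_, ?_⟩
  · ext i j
    simp [outer, conjTranspose_apply, mul_comm]
  · intro x
    have h : star x ⬝ᵥ (outer v *ᵥ x) = star (star v ⬝ᵥ x) * (star v ⬝ᵥ x) := by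
      simp only [dotProduct, mulVec, outer, Pi.star_apply, star_sum, star_mul', star_star,
        Finset.sum_mul, Finset.mul_sum]
      rw [Finset.sum_comm]
      refine Finset.sum_congr rfl fun i _ => Finset.sum_congr rfl fun j _ => by ring
    rw [h]
    exact star_mul_self_nonneg _

lemma hs_outer_eq {α : Type} [Fintype α] [DecidableEq α] {σ : Mat α} (hH : σ.IsHermitian)
    (u : α → ℂ) : hs σ (outer u) = star u ⬝ᵥ (σ *ᵥ u) := by
  have h : ∀ i j, star (σ j i) = σ i j := fun i j => congrFun (congrFun hH i) j
  simp only [hs, Matrix.trace, Matrix.diag, Matrix.mul_apply, conjTranspose_apply, outer,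
    dotProduct, mulVec, Finset.mul_sum, Pi.star_apply]
  refine Finset.sum_congr rfl fun i _ => Finset.sum_congr rfl fun j _ => by
    rw [← h i j]; ring

lemma hs_outer_nonneg {α : Type} [Fintype α] [DecidableEq α] {σ : Mat α} (hσ : σ.PosSemidef)
    (u : α → ℂ) : 0 ≤ (hs σ (outer u)).re := by
  have h := hσ.dotProduct_mulVec_nonneg u
  rw [hs_outer_eq hσ.1]
  simpa using (Complex.le_def.mp h).1

lemma slc_posSemidef {τ : Mat (Fin 2 × Fin 2 × Fin 3 × Fin 2)} (hτ : τ.PosSemidef)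
    (c g : Fin 2) : (slc c g τ).PosSemidef := by
  refine Matrix.posSemidef_iff_dotProduct_mulVec.mpr ⟨?_, ?_⟩
  · ext p q
    simp only [conjTranspose_apply, slc]
    exact congrFun (congrFun hτ.1 (c, p.1, p.2, g)) (c, q.1, q.2, g)
  · intro x
    have key := hτ.dotProduct_mulVec_nonneg (fun i => if i.1 = c ∧ i.2.2.2 = g then x (i.2.1, i.2.2.1) else 0)
    have h : star x ⬝ᵥ (slc c g τ *ᵥ x) =
        star (fun (i : Fin 2 × Fin 2 × Fin 3 × Fin 2) =>
            if i.1 = c ∧ i.2.2.2 = g then x (i.2.1, i.2.2.1) else 0) ⬝ᵥ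
          (τ *ᵥ fun i => if i.1 = c ∧ i.2.2.2 = g then x (i.2.1, i.2.2.1) else 0) := by
      simp only [dotProduct, mulVec, slc, Fintype.sum_prod_type, Pi.star_apply,
        mul_ite, ite_mul, mul_one, mul_zero, zero_mul, one_mul, star_ite, star_zero,
        Finset.mul_sum, Finset.sum_ite_irrel, Finset.sum_const_zero, Finset.sum_ite_eq,
        Finset.sum_ite_eq', Finset.mem_univ, if_true, ite_and, reduceIte,
        Fin.sum_univ_two, Fin.sum_univ_three]
      try ring
    rw [h]; exact key

/-! ### Structure of the objective -/

lemma hs_split (τ : Mat (Fin 2 × Fin 2 × Fin 3 × Fin 2)) :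
    hs τ QBC + hs τ QOT = ∑ c : Fin 2, ∑ g : Fin 2, hs (slc c g τ) (P2 g) := by
  simp only [hs, Matrix.trace, Matrix.diag, Matrix.mul_apply, conjTranspose_apply,
    QBC, QOT, P2, slc, ket, Fintype.sum_prod_type, mul_ite, ite_mul, mul_one, mul_zero,
    zero_mul, one_mul, star_ite, star_one, star_zero, ite_and, Finset.sum_ite_irrel,
    Finset.sum_const_zero, Finset.sum_ite_eq, Finset.sum_ite_eq', Finset.mem_univ, if_true,
    Fin.sum_univ_two, Fin.sum_univ_three, reduceIte, Finset.sum_add_distrib,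
    Finset.mul_sum, Finset.sum_mul]
  ring

set_option maxHeartbeats 1000000 in
lemma hs_trCG_eq (τ : Mat (Fin 2 × Fin 2 × Fin 3 × Fin 2)) (Z : Mat (Fin 2 × Fin 3)) :
    hs (trCG τ) Z = ∑ c : Fin 2, ∑ g : Fin 2, hs (slc c g τ) Z := by
  simp only [hs, Matrix.trace, Matrix.diag, Matrix.mul_apply, conjTranspose_apply,
    trCG, slc, star_sum, star_add, Finset.sum_mul, Fin.sum_univ_two, Fintype.sum_prod_type,
    Fin.sum_univ_three, Finset.sum_add_distrib]
  ring

lemma hs_sub_right {α : Type} [Fintype α] (A B C : Mat α) :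
    hs A (B - C) = hs A B - hs A C := by
  simp [hs, Matrix.mul_sub]

lemma hs_add_right {α : Type} [Fintype α] (A B C : Mat α) :
    hs A (B + C) = hs A B + hs A C := by
  simp [hs, Matrix.mul_add]

/-! ### The reduced state -/

lemma psi_val (p : Fin 2 × Fin 3 × Fin 3) :
    psiBC p = ((if p.2.1 = f23 p.1 ∧ p.2.2 = f23 p.1 then 1 else 0) +
      (if p.2.1 = 2 ∧ p.2.2 = 2 then (1 : ℂ) else 0)) / 2 := by
  have h2 : ((Real.sqrt 2 : ℝ) : ℂ) * ((Real.sqrt 2 : ℝ) : ℂ) = 2 := by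
    rw [← Complex.ofReal_mul, Real.mul_self_sqrt (by norm_num)]
    norm_num
  simp only [psiBC, phi, ket, div_div, h2, Prod.mk.injEq]

lemma rho_eq : trB_psi (outer psiBC) = rhoE := by
  ext p q
  simp only [trB_psi, outer, psi_val, rhoE]
  fin_cases p <;> fin_cases q <;>
    simp [Fin.sum_univ_three, f23, star_div₀, star_add] <;> norm_num

/-! ### Dual certificate decompositions -/

lemma ZZ_sub_P0 (x y : ℝ) (h : y^2 = x^2 + 1) :
    ZZ x y - P2 0 = outer (ket ((1 : Fin 2), (0 : Fin 3))) + outer (ket (1, 1)) +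
      outer (fun p => (x : ℂ) * ket ((0 : Fin 2), (2 : Fin 3)) p + (y : ℂ) * ket (1, 2) p) := by
  have h' : ((y : ℂ))^2 = (x : ℂ)^2 + 1 := by exact_mod_cast h
  ext p q
  fin_cases p <;> fin_cases q <;>
    simp [ZZ, P2, outer, ket, Prod.ext_iff, star_add, star_mul',
      star_ite, star_one, star_zero, Complex.star_def, Complex.conj_ofReal] <;>
    first
      | rfl
      | ring1
      | linear_combination h'

lemma ZZ_sub_P1 (x y : ℝ) (h : y^2 = x^2 + 1) :
    ZZ x y - P2 1 = outer (ket ((0 : Fin 2), (0 : Fin 3))) + outer (ket (0, 1)) +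
      outer (fun p => (y : ℂ) * ket ((0 : Fin 2), (2 : Fin 3)) p + (x : ℂ) * ket (1, 2) p) := by
  have h' : ((y : ℂ))^2 = (x : ℂ)^2 + 1 := by exact_mod_cast h
  ext p q
  fin_cases p <;> fin_cases q <;>
    simp [ZZ, P2, outer, ket, Prod.ext_iff, star_add, star_mul',
      star_ite, star_one, star_zero, Complex.star_def, Complex.conj_ofReal] <;>
    first
      | rfl
      | ring1
      | linear_combination h'

lemma hs_rhoE_ZZ (x y : ℝ) :
    hs rhoE (ZZ x y) = (((1 : ℝ)/2 + (y^2 + x*y)/2 : ℝ) : ℂ) := by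
  simp only [hs, Matrix.trace, Matrix.diag, Matrix.mul_apply, conjTranspose_apply,
    rhoE, ZZ, Fintype.sum_prod_type, Fin.sum_univ_two, Fin.sum_univ_three,
    star_add, star_ite, star_one, star_zero, Prod.mk.injEq, ite_and, reduceIte]
  push_cast
  norm_num
  ring

/-! ### The optimal cheating strategy -/

def tau0 : Mat (Fin 2 × Fin 2 × Fin 3 × Fin 2) :=
  outer (fun i => (2 : ℂ)⁻¹ * ket ((0 : Fin 2), (0 : Fin 2), (0 : Fin 3), (0 : Fin 2)) i) +
  outer (fun i => (2 : ℂ)⁻¹ * ket ((0 : Fin 2), (1 : Fin 2), (1 : Fin 3), (1 : Fin 2)) i) +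
  outer (fun i => (2 : ℂ)⁻¹ * (ket ((0 : Fin 2), (0 : Fin 2), (2 : Fin 3), (0 : Fin 2)) i +
    ket ((0 : Fin 2), (1 : Fin 2), (2 : Fin 3), (0 : Fin 2)) i))

lemma tau0_posSemidef : tau0.PosSemidef :=
  ((outer_posSemidef _).add (outer_posSemidef _)).add (outer_posSemidef _)

set_option maxHeartbeats 1000000 in
lemma tau0_trace : tau0.trace = 1 := by
  simp only [tau0, Matrix.trace, Matrix.diag, Matrix.add_apply, outer, ket,
    Fintype.sum_prod_type, Fin.sum_univ_two, Fin.sum_univ_three, Prod.mk.injEq, ite_and,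
    star_mul', star_ite, star_one, star_zero, star_add, reduceIte, star_inv₀]
  norm_num [Fin.ext_iff]

set_option maxHeartbeats 1000000 in
lemma tau0_constraint : trCG tau0 = rhoE := by
  ext p q
  simp only [trCG, tau0, Matrix.add_apply, outer, ket, rhoE, Prod.mk.injEq, ite_and,
    star_mul', star_ite, star_one, star_zero, star_add, star_inv₀, Fin.sum_univ_two]
  fin_cases p <;> fin_cases q <;> norm_num [Fin.ext_iff]

set_option maxHeartbeats 1000000 in
lemma tau0_obj : hs tau0 QBC + hs tau0 QOT = ((3/4 : ℝ) : ℂ) := by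
  rw [hs_split tau0]
  simp only [Fin.sum_univ_two, hs, Matrix.trace, Matrix.diag, Matrix.mul_apply,
    conjTranspose_apply, slc, P2, tau0, Matrix.add_apply, outer, ket,
    Fintype.sum_prod_type, Fin.sum_univ_two, Fin.sum_univ_three, Prod.mk.injEq, ite_and,
    star_mul', star_ite, star_one, star_zero, star_add, star_inv₀, reduceIte]
  norm_num [Fin.ext_iff]

/-! ### Main theorem -/

theorem bc_ot_switch_cheating_Bob :
    IsGreatest
      {x : ℝ | ∃ τ : Mat (Fin 2 × Fin 2 × Fin 3 × Fin 2),
        IsDensity τ ∧ trCG τ = trB_psi (outer psiBC) ∧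
        x = (hs τ QBC + hs τ QOT).re}
      (3/4) := by
  constructor
  · exact ⟨tau0, ⟨tau0_posSemidef, tau0_trace⟩, by rw [tau0_constraint, rho_eq],
      by rw [tau0_obj, Complex.ofReal_re]⟩
  · rintro x ⟨τ, ⟨hpsd, -⟩, hcon, hx⟩
    refine le_of_forall_pos_le_add fun ε hε => ?_
    set t : ℝ := max 1 (Real.sqrt ε)⁻¹ with ht
    have ht1 : (1 : ℝ) ≤ t := le_max_left _ _
    have ht0 : (0 : ℝ) < t := lt_of_lt_of_le one_pos ht1
    set xr : ℝ := (t⁻¹ - t)/2 with hxr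
    set yr : ℝ := (t + t⁻¹)/2 with hyr
    have hxy : yr^2 = xr^2 + 1 := by
      rw [hxr, hyr]
      field_simp
      ring
    -- the value of the dual certificate
    have hsum : hs (trCG τ) (ZZ xr yr) = (((1 : ℝ)/2 + (yr^2 + xr*yr)/2 : ℝ) : ℂ) := by
      rw [hcon, rho_eq, hs_rhoE_ZZ]
    -- decompose the objective
    have e1 : hs τ QBC + hs τ QOT =
        (((1 : ℝ)/2 + (yr^2 + xr*yr)/2 : ℝ) : ℂ) -
          (hs (slc 0 0 τ) (ZZ xr yr - P2 0) + hs (slc 0 1 τ) (ZZ xr yr - P2 1) +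
           hs (slc 1 0 τ) (ZZ xr yr - P2 0) + hs (slc 1 1 τ) (ZZ xr yr - P2 1)) := by
      rw [hs_split τ, ← hsum, hs_trCG_eq τ (ZZ xr yr)]
      simp only [Fin.sum_univ_two, hs_sub_right]
      ring
    have n00 : 0 ≤ (hs (slc 0 0 τ) (ZZ xr yr - P2 0)).re := by
      rw [ZZ_sub_P0 xr yr hxy, hs_add_right, hs_add_right]
      simp only [Complex.add_re]
      have h := slc_posSemidef hpsd 0 0
      have := hs_outer_nonneg h (ket ((1 : Fin 2), (0 : Fin 3)))
      have := hs_outer_nonneg h (ket ((1 : Fin 2), (1 : Fin 3)))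
      have := hs_outer_nonneg h
        (fun p => (xr : ℂ) * ket ((0 : Fin 2), (2 : Fin 3)) p + (yr : ℂ) * ket (1, 2) p)
      linarith
    have n10 : 0 ≤ (hs (slc 1 0 τ) (ZZ xr yr - P2 0)).re := by
      rw [ZZ_sub_P0 xr yr hxy, hs_add_right, hs_add_right]
      simp only [Complex.add_re]
      have h := slc_posSemidef hpsd 1 0
      have := hs_outer_nonneg h (ket ((1 : Fin 2), (0 : Fin 3)))
      have := hs_outer_nonneg h (ket ((1 : Fin 2), (1 : Fin 3)))
      have := hs_outer_nonneg h
        (fun p => (xr : ℂ) * ket ((0 : Fin 2), (2 : Fin 3)) p + (yr : ℂ) * ket (1, 2) p)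
      linarith
    have n01 : 0 ≤ (hs (slc 0 1 τ) (ZZ xr yr - P2 1)).re := by
      rw [ZZ_sub_P1 xr yr hxy, hs_add_right, hs_add_right]
      simp only [Complex.add_re]
      have h := slc_posSemidef hpsd 0 1
      have := hs_outer_nonneg h (ket ((0 : Fin 2), (0 : Fin 3)))
      have := hs_outer_nonneg h (ket ((0 : Fin 2), (1 : Fin 3)))
      have := hs_outer_nonneg h
        (fun p => (yr : ℂ) * ket ((0 : Fin 2), (2 : Fin 3)) p + (xr : ℂ) * ket (1, 2) p)
      linarith
    have n11 : 0 ≤ (hs (slc 1 1 τ) (ZZ xr yr - P2 1)).re := by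
      rw [ZZ_sub_P1 xr yr hxy, hs_add_right, hs_add_right]
      simp only [Complex.add_re]
      have h := slc_posSemidef hpsd 1 1
      have := hs_outer_nonneg h (ket ((0 : Fin 2), (0 : Fin 3)))
      have := hs_outer_nonneg h (ket ((0 : Fin 2), (1 : Fin 3)))
      have := hs_outer_nonneg h
        (fun p => (yr : ℂ) * ket ((0 : Fin 2), (2 : Fin 3)) p + (xr : ℂ) * ket (1, 2) p)
      linarith
    have hxval : x ≤ (1 : ℝ)/2 + (yr^2 + xr*yr)/2 := by
      have e2 := congrArg Complex.re e1
      rw [← hx, Complex.sub_re, Complex.ofReal_re, Complex.add_re, Complex.add_re,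
        Complex.add_re] at e2
      linarith
    -- numeric bound
    have hval : (1 : ℝ)/2 + (yr^2 + xr*yr)/2 = 3/4 + 1/(4*t^2) := by
      rw [hxr, hyr]
      field_simp
      ring
    have hbound : 1/(4*t^2) ≤ ε := by
      rcases le_or_gt 1 ε with hc | hc
      · have h1 : (1 : ℝ) ≤ t^2 := by nlinarith
        have h2 : (4 : ℝ) ≤ 4*t^2 := by nlinarith
        have : 1/(4*t^2) ≤ 1/4 := one_div_le_one_div_of_le (by norm_num) h2
        linarith
      · have hs0 : (0 : ℝ) < Real.sqrt ε := Real.sqrt_pos.mpr hε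
        have h2 : (Real.sqrt ε)⁻¹ ≤ t := le_max_right _ _
        have h3 : Real.sqrt ε * Real.sqrt ε = ε := Real.mul_self_sqrt hε.le
        have h4 : ε⁻¹ ≤ t^2 := by
          have := mul_le_mul h2 h2 (by positivity) ht0.le
          calc ε⁻¹ = (Real.sqrt ε)⁻¹ * (Real.sqrt ε)⁻¹ := by
                rw [← mul_inv, h3]
            _ ≤ t * t := this
            _ = t^2 := by ring
        have h5 : (0 : ℝ) < ε⁻¹ := by positivity
        have h6 : 1/(4*t^2) ≤ 1/(4*ε⁻¹) :=
          one_div_le_one_div_of_le (by linarith) (by linarith)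
        have h7 : 1/(4*ε⁻¹) = ε/4 := by field_simp
        linarith
    linarith

end
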